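/- Let X be a second countable topological space and let Γ be a second countable, locally compact, Hausdorff topological group that is not compact, acting continuously on X. If (X, Γ) is thick strong mixing, then (X, Γ) is k-transitive for every k ∈ ℕ. -/

import Mathlib

open Pointwise

/-- A subset `N` of a group `G` is thick if for every finite subset `F ⊆ G`,
`N ∩ ⋂_{γ ∈ F} γN ≠ ∅`. -/
def IsThick {G : Type*} [Group G] (N : Set G) : Prop :=
  ∀ F : Finset G, (N ∩ ⋂ γ ∈ F, γ • N).Nonempty

/-- `N(A, B) = {γ ∈ G : γA ∩ B ≠ ∅}`. -/
def NSet (G : Type*) {X : Type*} [Group G] [MulAction G X] (A B : Set X) : Set G :=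
  {γ : G | ((γ • A) ∩ B).Nonempty}

/-- The system `(X, G)` is `k`-transitive: for all nonempty open sets
`U₁, …, U_k, V₁, …, V_k ⊆ X` there is `γ ∈ G` with `γUᵢ ∩ Vᵢ ≠ ∅` for all `i`. -/
def IsKTrans (G : Type*) (X : Type*) [Group G] [TopologicalSpace X] [MulAction G X]
    (k : ℕ) : Prop :=
  ∀ U V : Fin k → Set X, (∀ i, IsOpen (U i)) → (∀ i, (U i).Nonempty) →
    (∀ i, IsOpen (V i)) → (∀ i, (V i).Nonempty) →
    ∃ γ : G, ∀ i, ((γ • U i) ∩ V i).Nonempty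

/-- The system `(X, G)` is thick strong mixing: there is a thick `N ⊆ G` such that for every
pair of nonempty open `U, V ⊆ X` there is a compact `F ⊆ N` with `γU ∩ V ≠ ∅` for all
`γ ∈ N \ F`. -/
def ThickStrongMixing (G : Type*) (X : Type*) [Group G] [TopologicalSpace G]
    [TopologicalSpace X] [MulAction G X] : Prop :=
  ∃ N : Set G, IsThick N ∧
    ∀ U V : Set X, IsOpen U → U.Nonempty → IsOpen V → V.Nonempty →
      ∃ F : Set G, IsCompact F ∧ F ⊆ N ∧ ∀ γ ∈ N \ F, ((γ • U) ∩ V).Nonempty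

/-- The system `(X, G)` is weak mixing: for all nonempty open `U₁, U₂, V₁, V₂ ⊆ X`
there is `γ ∈ G` with `γU₁ ∩ V₁ ≠ ∅` and `γU₂ ∩ V₂ ≠ ∅`. -/
def WeakMixing (G : Type*) (X : Type*) [Group G] [TopologicalSpace X] [MulAction G X] :
    Prop :=
  ∀ U₁ U₂ V₁ V₂ : Set X, IsOpen U₁ → U₁.Nonempty → IsOpen U₂ → U₂.Nonempty →
    IsOpen V₁ → V₁.Nonempty → IsOpen V₂ → V₂.Nonempty →
    ∃ γ : G, ((γ • U₁) ∩ V₁).Nonempty ∧ ((γ • U₂) ∩ V₂).Nonempty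


/-- For `X` second countable and `Γ` a second countable, locally compact, Hausdorff
topological group that is not compact, acting continuously on `X`: if `(X, Γ)` is thick
strong mixing then it is `k`-transitive for every `k`. -/
theorem thickStrongMixing_implies_kTrans {X Γ : Type*} [TopologicalSpace X]
    [SecondCountableTopology X] [Group Γ] [TopologicalSpace Γ] [IsTopologicalGroup Γ]
    [T2Space Γ] [SecondCountableTopology Γ] [LocallyCompactSpace Γ]
    (hnc : ¬ CompactSpace Γ) [MulAction Γ X] [ContinuousSMul Γ X]
    (h : ThickStrongMixing Γ X) :
    ∀ k : ℕ, IsKTrans Γ X k := by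
  obtain ⟨N, hthick, hmix⟩ := h
  intro k U V hUo hUne hVo hVne
  choose F hFc hFN hF using fun i => hmix (U i) (V i) (hUo i) (hUne i) (hVo i) (hVne i)
  have hKc : IsCompact (⋃ i, F i) := isCompact_iUnion hFc
  have hex : ∃ γ ∈ N, γ ∉ ⋃ i, F i := by
    by_contra hcon
    push_neg at hcon
    -- then N ⊆ K, but a thick set can't be contained in a compact set of a noncompact group
    have hKK : IsCompact ((⋃ i, F i) * (⋃ i, F i)⁻¹) := hKc.mul hKc.inv
    have hne : ((⋃ i, F i) * (⋃ i, F i)⁻¹) ≠ Set.univ := by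
      intro heq
      exact hnc ⟨heq ▸ hKK⟩
    obtain ⟨g, hg⟩ : ∃ g : Γ, g ∉ (⋃ i, F i) * (⋃ i, F i)⁻¹ := by
      by_contra hg; push_neg at hg
      exact hne (Set.eq_univ_of_forall hg)
    obtain ⟨n, hn1, hn2⟩ := hthick {g}
    simp only [Finset.mem_singleton, Set.mem_iInter] at hn2
    have hn2' : n ∈ g • N := hn2 g rfl
    obtain ⟨m, hm, hgm⟩ := hn2'
    apply hg
    have hgeq : g = n * m⁻¹ := by
      have : g * m = n := hgm
      rw [← this]; group
    rw [hgeq]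
    exact Set.mul_mem_mul (hcon n hn1) (Set.inv_mem_inv.2 (hcon m hm))
  obtain ⟨γ, hγN, hγK⟩ := hex
  exact ⟨γ, fun i => hF i γ ⟨hγN, fun h' => hγK (Set.mem_iUnion.2 ⟨i, h'⟩)⟩⟩
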